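/- For every j ∉ {1, i} and every integer r ≥ 2, one has P(F^{r,1}_{1,j}) ≥ P(F^{1,r}_{1,j}). -/

import Mathlib

open MeasureTheory ProbabilityTheory ENNReal

namespace BallsBins

variable {k : ℕ}

/-- Number of times bin `j` is selected during the first `t` rounds of `ω`. -/
def numSel (ω : ℕ → Fin k) (j : Fin k) (t : ℕ) : ℕ :=
  ((Finset.range t).filter (fun s => ω s = j)).card

/-- Content (possibly negative) of bin `j` at the end of round `t`, started from `n`. -/
def content (n : Fin k → ℕ) (ω : ℕ → Fin k) (j : Fin k) (t : ℕ) : ℤ :=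
  (n j : ℤ) - numSel ω j t

/-- The set of non-empty bins at the end of round `t`. -/
def nonemptyBins (n : Fin k → ℕ) (ω : ℕ → Fin k) (t : ℕ) : Finset (Fin k) :=
  Finset.univ.filter (fun j => 0 < content n ω j t)

/-- `T n ω` : the first round at which a unique non-empty bin remains (`⊤` if never). -/
noncomputable def T (n : Fin k → ℕ) (ω : ℕ → Fin k) : ℕ∞ :=
  sInf ((fun t : ℕ => (t : ℕ∞)) '' {t | (nonemptyBins n ω t).card = 1})

/-- `X n ω` : the number of balls remaining when the process stops, i.e. at round `T n ω`. -/
noncomputable def X (n : Fin k → ℕ) (ω : ℕ → Fin k) : ℕ :=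
  ∑ j, (n j - numSel ω j (T n ω).toNat)

/-- Condition (a): bin `b1` contains exactly one ball more than bin `i` at the end of round `t`. -/
def condA (n : Fin k → ℕ) (b1 i : Fin k) (ω : ℕ → Fin k) (t : ℕ) : Prop :=
  content n ω b1 t = content n ω i t + 1

/-- Condition (b): at the end of round `t` there are exactly two non-empty bins and one of
them contains exactly one ball. -/
def condB (n : Fin k → ℕ) (ω : ℕ → Fin k) (t : ℕ) : Prop :=
  (nonemptyBins n ω t).card = 2 ∧ ∃ j, content n ω j t = 1

/-- `S n b1 i ω` : the first round at the end of which condition (a) or (b) occurs. -/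
noncomputable def S (n : Fin k → ℕ) (b1 i : Fin k) (ω : ℕ → Fin k) : ℕ∞ :=
  sInf ((fun t : ℕ => (t : ℕ∞)) '' {t | condA n b1 i ω t ∨ condB n ω t})

/-- `Ca n b1 i` : the event that condition (a) occurs at round `S n b1 i`. -/
def Ca (n : Fin k → ℕ) (b1 i : Fin k) : Set (ℕ → Fin k) :=
  {ω | ∃ t : ℕ, S n b1 i ω = (t : ℕ∞) ∧ condA n b1 i ω t}

/-- The event that bins `p` and `q` are the last two non-empty bins. -/
def lastTwo (n : Fin k → ℕ) (p q : Fin k) : Set (ℕ → Fin k) :=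
  {ω | ∃ t : ℕ, nonemptyBins n ω t = {p, q}}

/-- The first round at which condition (b) is triggered (`⊤` if never). -/
noncomputable def TB (n : Fin k → ℕ) (ω : ℕ → Fin k) : ℕ∞ :=
  sInf ((fun t : ℕ => (t : ℕ∞)) '' {t | condB n ω t})

/-- `Fab n b1 j a b` : the event that bins `b1` and `j` are the last two non-empty bins and,
at the first round at which condition (b) is triggered, bins `b1` and `j` contain `a` and `b`
balls respectively. -/
def Fab (n : Fin k → ℕ) (b1 j : Fin k) (a b : ℕ) : Set (ℕ → Fin k) :=
  lastTwo n b1 j ∩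
    {ω | ∃ t : ℕ, TB n ω = (t : ℕ∞) ∧ content n ω b1 t = (a : ℤ) ∧ content n ω j t = (b : ℤ)}

/-- The assignment `n - e_{b1} + e_i`. -/
def shift (n : Fin k → ℕ) (b1 i : Fin k) : Fin k → ℕ :=
  Function.update (Function.update n b1 (n b1 - 1)) i (n i + 1)

/-- The uniform probability measure on `Fin k`. -/
noncomputable def unifFin (k : ℕ) : Measure (Fin k) := (k : ℝ≥0∞)⁻¹ • Measure.count

/-- `IsIIDUniform μ` : `μ` is a probability measure on `[k]^ℕ` under which the coordinates
are independent and each is uniformly distributed on `Fin k`; this uniquely characterizes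
the product of uniform measures. -/
structure IsIIDUniform (μ : Measure (ℕ → Fin k)) : Prop where
  prob : IsProbabilityMeasure μ
  indep : iIndepFun (fun (t : ℕ) (ω : ℕ → Fin k) => ω t) μ
  unif : ∀ t : ℕ, μ.map (fun ω : ℕ → Fin k => ω t) = unifFin k

-- basic lemmas
lemma numSel_zero (ω : ℕ → Fin k) (m : Fin k) : numSel ω m 0 = 0 := by
  simp [numSel]

lemma content_zero (n : Fin k → ℕ) (ω : ℕ → Fin k) (m : Fin k) :
    content n ω m 0 = (n m : ℤ) := by simp [content, numSel_zero]

lemma numSel_succ (ω : ℕ → Fin k) (m : Fin k) (s : ℕ) :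
    numSel ω m (s + 1) = numSel ω m s + (if ω s = m then 1 else 0) := by
  classical
  unfold numSel
  rw [Finset.range_add_one, Finset.filter_insert]
  split <;> simp [Finset.card_insert_of_notMem, Finset.notMem_range_self]

lemma content_succ (n : Fin k → ℕ) (ω : ℕ → Fin k) (m : Fin k) (s : ℕ) :
    content n ω m (s + 1) = content n ω m s - (if ω s = m then 1 else 0) := by
  unfold content
  rw [numSel_succ]
  push_cast
  split <;> ring

lemma numSel_congr {ω ω' : ℕ → Fin k} {t : ℕ} (h : ∀ s < t, ω s = ω' s) (m : Fin k) :
    numSel ω m t = numSel ω' m t := by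
  unfold numSel
  congr 1
  apply Finset.filter_congr
  intro s hs
  rw [h s (Finset.mem_range.mp hs)]

lemma content_congr {t : ℕ} {ω ω' : ℕ → Fin k} (h : ∀ s < t, ω s = ω' s)
    (n : Fin k → ℕ) (m : Fin k) : content n ω m t = content n ω' m t := by
  unfold content; rw [numSel_congr h]

lemma condB_congr {t : ℕ} {ω ω' : ℕ → Fin k} (h : ∀ s < t, ω s = ω' s)
    (n : Fin k → ℕ) : condB n ω t ↔ condB n ω' t := by
  have hc : ∀ m, content n ω m t = content n ω' m t := content_congr h n
  unfold condB nonemptyBins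
  simp only [hc]

lemma sInf_image_coe_eq_iff {P : ℕ → Prop} {t : ℕ} :
    sInf ((fun t : ℕ => (t : ℕ∞)) '' {s | P s}) = (t : ℕ∞) ↔ P t ∧ ∀ s < t, ¬ P s := by
  constructor
  · intro h
    have hne : {s | P s}.Nonempty := by
      by_contra hne
      rw [Set.not_nonempty_iff_eq_empty] at hne
      rw [hne] at h
      simp at h
    have hmem : sInf {s | P s} ∈ {s | P s} := Nat.sInf_mem hne
    have h2 : sInf ((fun t : ℕ => (t : ℕ∞)) '' {s | P s}) = ((sInf {s | P s} : ℕ) : ℕ∞) := by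
      apply le_antisymm
      · exact sInf_le ⟨_, hmem, rfl⟩
      · apply le_sInf
        rintro x ⟨s, hs, rfl⟩
        simp only []
        exact_mod_cast Nat.sInf_le hs
    rw [h] at h2
    have ht : t = sInf {s | P s} := by exact_mod_cast h2
    constructor
    · rw [ht]; exact hmem
    · intro s hs hPs
      rw [ht] at hs
      exact absurd (Nat.sInf_le hPs) (not_le.mpr hs)
  · rintro ⟨hPt, hmin⟩
    apply le_antisymm
    · exact sInf_le ⟨t, hPt, rfl⟩
    · apply le_sInf
      rintro x ⟨s, hs, rfl⟩
      simp only []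
      by_contra hlt
      push_neg at hlt
      have : s < t := by exact_mod_cast hlt
      exact hmin s this hs

lemma TB_eq_iff {n : Fin k → ℕ} {ω : ℕ → Fin k} {t : ℕ} :
    TB n ω = (t : ℕ∞) ↔ condB n ω t ∧ ∀ s < t, ¬ condB n ω s :=
  sInf_image_coe_eq_iff

/-- Swap bins `b1` and `j` in all rounds from `τ` on. -/
def swapAfter (b1 j : Fin k) (τ : ℕ) (ω : ℕ → Fin k) : ℕ → Fin k :=
  fun s => if τ ≤ s then Equiv.swap b1 j (ω s) else ω s

lemma swapAfter_swapAfter (b1 j : Fin k) (τ : ℕ) (ω : ℕ → Fin k) :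
    swapAfter b1 j τ (swapAfter b1 j τ ω) = ω := by
  funext s
  unfold swapAfter
  split <;> simp

lemma content_swapAfter_low (n : Fin k → ℕ) (b1 j : Fin k) (τ : ℕ) (ω : ℕ → Fin k)
    (m : Fin k) {s : ℕ} (hs : s ≤ τ) :
    content n (swapAfter b1 j τ ω) m s = content n ω m s := by
  apply content_congr
  intro u hu
  unfold swapAfter
  rw [if_neg (by omega)]

lemma content_swapAfter (n : Fin k → ℕ) {b1 j : Fin k} (hbj : b1 ≠ j) {τ : ℕ} {ω : ℕ → Fin k}
    (hτ : content n ω b1 τ = content n ω j τ) :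
    ∀ s, τ ≤ s →
      content n (swapAfter b1 j τ ω) b1 s = content n ω j s ∧
      content n (swapAfter b1 j τ ω) j s = content n ω b1 s ∧
      ∀ m, m ≠ b1 → m ≠ j → content n (swapAfter b1 j τ ω) m s = content n ω m s := by
  intro s hs
  induction s, hs using Nat.le_induction with
  | base =>
    refine ⟨?_, ?_, fun m _ _ => ?_⟩ <;>
      rw [content_swapAfter_low n b1 j τ ω _ le_rfl]
    · exact hτ
    · exact hτ.symm
  | succ s hs ih =>
    obtain ⟨ih1, ih2, ih3⟩ := ih
    have hω : swapAfter b1 j τ ω s = Equiv.swap b1 j (ω s) := by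
      unfold swapAfter; rw [if_pos hs]
    refine ⟨?_, ?_, fun m hm1 hm2 => ?_⟩
    · rw [content_succ, content_succ, ih1, hω]
      congr 1
      simp only [Equiv.swap_apply_eq_iff, Equiv.swap_apply_left]
    · rw [content_succ, content_succ, ih2, hω]
      congr 1
      simp only [Equiv.swap_apply_eq_iff, Equiv.swap_apply_right]
    · rw [content_succ, content_succ, ih3 m hm1 hm2, hω]
      congr 1
      have : Equiv.swap b1 j m = m := Equiv.swap_apply_of_ne_of_ne hm1 hm2
      simp only [Equiv.swap_apply_eq_iff, this]

lemma condB_of_contents_eq {n : Fin k → ℕ} {ω ω' : ℕ → Fin k} {s : ℕ}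
    (e : Equiv (Fin k) (Fin k))
    (h : ∀ m, content n ω' m s = content n ω (e m) s) : condB n ω' s ↔ condB n ω s := by
  have himg : nonemptyBins n ω' s = Finset.image e.symm (nonemptyBins n ω s) := by
    ext m
    simp only [nonemptyBins, Finset.mem_image, Finset.mem_filter, Finset.mem_univ, true_and, h m]
    constructor
    · intro hm; exact ⟨e m, hm, e.symm_apply_apply m⟩
    · rintro ⟨x, hx, rfl⟩; rwa [e.apply_symm_apply]
  unfold condB
  rw [himg, Finset.card_image_of_injective _ e.symm.injective]
  constructor
  · rintro ⟨hc, m, hm⟩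
    exact ⟨hc, e m, by rw [← h m]; exact hm⟩
  · rintro ⟨hc, m, hm⟩
    exact ⟨hc, e.symm m, by rw [h, e.apply_symm_apply]; exact hm⟩


/-- Goodness predicate: condB first triggers at round `t` with contents `a`, `b` in bins
`b1`, `j`. -/
def GoodP (n : Fin k → ℕ) (b1 j : Fin k) (a b t : ℕ) (ω : ℕ → Fin k) : Prop :=
  TB n ω = (t : ℕ∞) ∧ content n ω b1 t = (a : ℤ) ∧ content n ω j t = (b : ℤ)

lemma GoodP_congr {n : Fin k → ℕ} {b1 j : Fin k} {a b t : ℕ} {ω ω' : ℕ → Fin k}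
    (h : ∀ s < t, ω s = ω' s) : GoodP n b1 j a b t ω ↔ GoodP n b1 j a b t ω' := by
  unfold GoodP
  rw [TB_eq_iff, TB_eq_iff,
    condB_congr h, content_congr h, content_congr h]
  constructor <;> rintro ⟨⟨h1, h2⟩, h3, h4⟩ <;>
    refine ⟨⟨h1, fun s hs => ?_⟩, h3, h4⟩
  · rw [← condB_congr (fun u hu => h u (by omega))]; exact h2 s hs
  · rw [condB_congr (fun u hu => h u (by omega))]; exact h2 s hs

/-- A canonical time `< t` at which bins `b1` and `j` have equal contents. -/
noncomputable def tau (n : Fin k → ℕ) (b1 j : Fin k) (t : ℕ) (ω : ℕ → Fin k) : ℕ :=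
  sSup {s : ℕ | s < t ∧ content n ω b1 s = content n ω j s}

lemma tau_congr {n : Fin k → ℕ} {b1 j : Fin k} {t : ℕ} {ω ω' : ℕ → Fin k}
    (h : ∀ s < t, ω s = ω' s) : tau n b1 j t ω = tau n b1 j t ω' := by
  unfold tau
  congr 1
  ext s
  constructor <;> rintro ⟨hs, he⟩ <;> refine ⟨hs, ?_⟩
  · rw [← content_congr (fun u hu => h u (by omega)) n b1,
      ← content_congr (fun u hu => h u (by omega)) n j]
    exact he
  · rw [content_congr (fun u hu => h u (by omega)) n b1,
      content_congr (fun u hu => h u (by omega)) n j]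
    exact he

/-- The key combinatorial step: swapping at time `tau` maps a `(1,r)`-good path to an
`(r,1)`-good path, preserving `tau`. -/
lemma good_swap {n : Fin k → ℕ} {b1 j : Fin k} (hbj : b1 ≠ j)
    (hmax : n j ≤ n b1) (hn2 : 2 ≤ n b1) {r t : ℕ} (hr : 2 ≤ r)
    {ω : ℕ → Fin k} (hg : GoodP n b1 j 1 r t ω) :
    GoodP n b1 j r 1 t (swapAfter b1 j (tau n b1 j t ω) ω) ∧
    tau n b1 j t (swapAfter b1 j (tau n b1 j t ω) ω) = tau n b1 j t ω := by
  obtain ⟨hTB, hc1, hcr⟩ := hg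
  rw [TB_eq_iff] at hTB
  obtain ⟨hBt, hmin⟩ := hTB
  -- t ≥ 1
  have ht1 : 1 ≤ t := by
    by_contra h
    have ht0 : t = 0 := by omega
    rw [ht0, content_zero] at hc1
    omega
  -- one-step change of contents
  have hstep : ∀ (m : Fin k) (s : ℕ),
      content n ω m s - 1 ≤ content n ω m (s+1) ∧ content n ω m (s+1) ≤ content n ω m s := by
    intro m s
    rw [content_succ]
    split <;> omega
  -- the zero set is nonempty
  have hZne : {s : ℕ | s < t ∧ content n ω b1 s = content n ω j s}.Nonempty := by
    set W : Set ℕ := {s : ℕ | s < t ∧ content n ω j s ≤ content n ω b1 s} with hW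
    have hWne : W.Nonempty := ⟨0, by omega, by rw [content_zero, content_zero]; exact_mod_cast hmax⟩
    have hWbdd : BddAbove W := ⟨t, fun s hs => le_of_lt hs.1⟩
    set s0 := sSup W with hs0
    have hs0mem : s0 ∈ W := Nat.sSup_mem hWne hWbdd
    have h1 : content n ω j s0 ≤ content n ω b1 s0 := hs0mem.2
    have hs0t : s0 < t := hs0mem.1
    have hnext : content n ω b1 (s0+1) < content n ω j (s0+1) := by
      rcases eq_or_lt_of_le (Nat.succ_le_of_lt hs0t) with he | hlt
      · have he' : s0 + 1 = t := he
        rw [he', hc1, hcr]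
        exact_mod_cast by omega
      · by_contra hc
        push_neg at hc
        have : s0 + 1 ∈ W := ⟨hlt, hc⟩
        have := le_csSup hWbdd this
        omega
    have hb := hstep b1 s0
    have hj := hstep j s0
    refine ⟨s0, hs0t, ?_⟩
    omega
  have hZbdd : BddAbove {s : ℕ | s < t ∧ content n ω b1 s = content n ω j s} :=
    ⟨t, fun s hs => le_of_lt hs.1⟩
  set τ := tau n b1 j t ω with hτdef
  have hτmem : τ ∈ {s : ℕ | s < t ∧ content n ω b1 s = content n ω j s} :=
    Nat.sSup_mem hZne hZbdd
  have hτt : τ < t := hτmem.1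
  have hτeq : content n ω b1 τ = content n ω j τ := hτmem.2
  set ω' := swapAfter b1 j τ ω with hω'
  have hA := content_swapAfter n hbj hτeq
  -- contents of ω' in terms of ω, for all s
  have hcontents : ∀ s, ∀ m, content n ω' m s =
      content n ω (if τ ≤ s then Equiv.swap b1 j m else m) s := by
    intro s m
    by_cases hs : τ ≤ s
    · rw [if_pos hs]
      obtain ⟨ha, hb, hc⟩ := hA s hs
      by_cases hm1 : m = b1
      · subst hm1; rw [Equiv.swap_apply_left]; exact ha
      · by_cases hm2 : m = j
        · subst hm2; rw [Equiv.swap_apply_right]; exact hb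
        · rw [Equiv.swap_apply_of_ne_of_ne hm1 hm2]; exact hc m hm1 hm2
    · rw [if_neg hs]
      exact content_swapAfter_low n b1 j τ ω m (by omega)
  -- condB is invariant
  have hcondB : ∀ s, condB n ω' s ↔ condB n ω s := by
    intro s
    by_cases hs : τ ≤ s
    · refine condB_of_contents_eq (Equiv.swap b1 j) fun m => ?_
      rw [hcontents s m, if_pos hs]
    · refine condB_of_contents_eq (Equiv.refl _) fun m => ?_
      rw [hcontents s m, if_neg hs]
      rfl
  constructor
  · refine ⟨TB_eq_iff.mpr ⟨(hcondB t).mpr hBt, fun s hs => ?_⟩, ?_, ?_⟩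
    · rw [hcondB s]; exact hmin s hs
    · rw [hcontents t b1, if_pos (le_of_lt hτt), Equiv.swap_apply_left]; exact hcr
    · rw [hcontents t j, if_pos (le_of_lt hτt), Equiv.swap_apply_right]; exact hc1
  · unfold tau
    congr 1
    ext s
    simp only [Set.mem_setOf_eq, and_congr_right_iff]
    intro hst
    rw [hcontents s b1, hcontents s j]
    by_cases hs : τ ≤ s
    · rw [if_pos hs, if_pos hs, Equiv.swap_apply_left, Equiv.swap_apply_right]
      exact ⟨Eq.symm, Eq.symm⟩
    · rw [if_neg hs, if_neg hs]

/-- Extend a finite word to an infinite sequence by a junk value `c`. -/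
def extW (c : Fin k) {t : ℕ} (w : Fin t → Fin k) : ℕ → Fin k :=
  fun s => if h : s < t then w ⟨s, h⟩ else c

lemma extW_lt (c : Fin k) {t : ℕ} (w : Fin t → Fin k) {s : ℕ} (hs : s < t) :
    extW c w s = w ⟨s, hs⟩ := dif_pos hs

/-- Word-level swapping map. -/
noncomputable def wordSwap (n : Fin k → ℕ) (b1 j : Fin k) (c : Fin k) {t : ℕ}
    (w : Fin t → Fin k) : Fin t → Fin k :=
  fun s => swapAfter b1 j (tau n b1 j t (extW c w)) (extW c w) s

lemma extW_wordSwap_agree (n : Fin k → ℕ) (b1 j c : Fin k) {t : ℕ} (w : Fin t → Fin k) :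
    ∀ s < t, extW c (wordSwap n b1 j c w) s
      = swapAfter b1 j (tau n b1 j t (extW c w)) (extW c w) s := by
  intro s hs
  rw [extW_lt c _ hs]
  rfl

lemma wordSwap_good {n : Fin k → ℕ} {b1 j : Fin k} (hbj : b1 ≠ j)
    (hmax : n j ≤ n b1) (hn2 : 2 ≤ n b1) {r t : ℕ} (hr : 2 ≤ r) (c : Fin k)
    {w : Fin t → Fin k} (hw : GoodP n b1 j 1 r t (extW c w)) :
    GoodP n b1 j r 1 t (extW c (wordSwap n b1 j c w)) := by
  rw [GoodP_congr (extW_wordSwap_agree n b1 j c w)]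
  exact (good_swap hbj hmax hn2 hr hw).1

lemma wordSwap_involutive {n : Fin k → ℕ} {b1 j : Fin k} (hbj : b1 ≠ j)
    (hmax : n j ≤ n b1) (hn2 : 2 ≤ n b1) {r t : ℕ} (hr : 2 ≤ r) (c : Fin k)
    {w : Fin t → Fin k} (hw : GoodP n b1 j 1 r t (extW c w)) :
    wordSwap n b1 j c (wordSwap n b1 j c w) = w := by
  set ω := extW c w with hω
  set τ := tau n b1 j t ω with hτ
  have hagree := extW_wordSwap_agree n b1 j c w
  have htau2 : tau n b1 j t (extW c (wordSwap n b1 j c w)) = τ := by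
    rw [tau_congr hagree]
    exact (good_swap hbj hmax hn2 hr hw).2
  funext s
  show swapAfter b1 j _ (extW c (wordSwap n b1 j c w)) s = w s
  rw [htau2]
  have hs : (s : ℕ) < t := s.isLt
  unfold swapAfter
  rw [hagree s hs]
  unfold swapAfter
  split <;> simp [extW_lt c w hs]

/-- The cylinder over a finite word. -/
def cylSet (t : ℕ) (w : Fin t → Fin k) : Set (ℕ → Fin k) := {ω | ∀ s : Fin t, ω s = w s}

lemma measurableSet_cylSet (t : ℕ) (w : Fin t → Fin k) : MeasurableSet (cylSet t w) := by
  have : cylSet t w = ⋂ s : Fin t, (fun ω : ℕ → Fin k => ω (s : ℕ)) ⁻¹' {w s} := by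
    ext ω; simp [cylSet, Set.mem_iInter]
  rw [this]
  exact MeasurableSet.iInter fun s =>
    (measurable_pi_apply _) (measurableSet_singleton _)

lemma cylSet_disjoint {t : ℕ} {w w' : Fin t → Fin k} (h : w ≠ w') :
    Disjoint (cylSet t w) (cylSet t w') := by
  rw [Set.disjoint_left]
  intro ω h1 h2
  exact h (funext fun s => (h1 s).symm.trans (h2 s))

lemma measure_cylSet {μ : Measure (ℕ → Fin k)} (hμ : IsIIDUniform μ) (t : ℕ)
    (w : Fin t → Fin k) : μ (cylSet t w) = ((k : ℝ≥0∞)⁻¹) ^ t := by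
  have hprob := hμ.prob
  rcases Nat.eq_zero_or_pos t with ht | ht
  · subst ht
    have : cylSet 0 w = Set.univ := by
      ext ω; simp [cylSet]
    rw [this, pow_zero]
    exact measure_univ
  · set c : Fin k := w ⟨0, ht⟩ with hc
    have hdecomp : cylSet t w
        = ⋂ s ∈ Finset.range t, (fun ω : ℕ → Fin k => ω s) ⁻¹' {extW c w s} := by
      ext ω
      simp only [cylSet, Set.mem_setOf_eq, Set.mem_iInter, Set.mem_preimage,
        Set.mem_singleton_iff, Finset.mem_range]
      constructor
      · intro h s hs; rw [extW_lt c w hs]; exact h ⟨s, hs⟩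
      · intro h s; rw [← extW_lt c w s.isLt]; exact h s s.isLt
    have hsingle : ∀ s : ℕ, μ ((fun ω : ℕ → Fin k => ω s) ⁻¹' {extW c w s})
        = (k : ℝ≥0∞)⁻¹ := by
      intro s
      rw [← Measure.map_apply (measurable_pi_apply s) (measurableSet_singleton _), hμ.unif s]
      simp [unifFin, Measure.smul_apply, Measure.count_singleton]
    rw [hdecomp,
      hμ.indep.measure_inter_preimage_eq_mul (Finset.range t)
        (sets := fun s => {extW c w s}) (fun i _ => measurableSet_singleton _)]
    rw [Finset.prod_congr rfl fun s _ => hsingle s]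
    rw [Finset.prod_const, Finset.card_range]

/-- For every `j ∉ {1, i}` and every integer `r ≥ 2`,
`P(F^{r,1}_{1,j}) ≥ P(F^{1,r}_{1,j})`. -/
theorem prob_Fr1_ge_F1r
    {k : ℕ} (hk : 2 ≤ k) (n : Fin k → ℕ) (b1 : Fin k) (hb1 : b1 = ⟨0, by omega⟩)
    (i : Fin k) (hmax : ∀ j : Fin k, n j ≤ n b1) (hi : n i + 2 ≤ n b1)
    (μ : Measure (ℕ → Fin k)) (hμ : IsIIDUniform μ)
    (j : Fin k) (hj : j ∉ ({b1, i} : Set (Fin k))) (r : ℕ) (hr : 2 ≤ r) :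
    μ (Fab n b1 j 1 r) ≤ μ (Fab n b1 j r 1) := by
  classical
  simp only [Set.mem_insert_iff, Set.mem_singleton_iff, not_or] at hj
  have hbj : b1 ≠ j := (Ne.symm hj.1)
  have hmaxj : n j ≤ n b1 := hmax j
  have hn2 : 2 ≤ n b1 := by omega
  -- the decomposed events
  set E : ℕ → ℕ → ℕ → Set (ℕ → Fin k) :=
    fun a b t => {ω | GoodP n b1 j a b t ω} with hE
  set G : ℕ → ℕ → (t : ℕ) → Finset (Fin t → Fin k) :=
    fun a b t => Finset.univ.filter (fun w => GoodP n b1 j a b t (extW b1 w)) with hG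
  -- decomposition into cylinders
  have hdecomp : ∀ a b t, E a b t = ⋃ w ∈ G a b t, cylSet t w := by
    intro a b t
    ext ω
    simp only [hE, Set.mem_setOf_eq, Set.mem_iUnion, hG, Finset.mem_filter,
      Finset.mem_univ, true_and]
    constructor
    · intro hω
      refine ⟨fun s => ω s, ?_, fun s => rfl⟩
      rw [← GoodP_congr (fun s hs => (extW_lt b1 (fun s : Fin t => ω s) hs).symm)]
      exact hω
    · rintro ⟨w, hw, hcyl⟩
      rw [GoodP_congr (fun s hs => ((hcyl ⟨s, hs⟩).trans (extW_lt b1 w hs).symm))]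
      exact hw
  have hmeas : ∀ a b t, MeasurableSet (E a b t) := by
    intro a b t
    rw [hdecomp]
    exact (G a b t).measurableSet_biUnion fun w _ => measurableSet_cylSet t w
  -- measure of each piece
  have hmeasure : ∀ a b t, μ (E a b t) = (G a b t).card * ((k : ℝ≥0∞)⁻¹) ^ t := by
    intro a b t
    rw [hdecomp]
    rw [measure_biUnion_finset ?hd fun w _ => measurableSet_cylSet t w]
    · rw [Finset.sum_congr rfl fun w _ => measure_cylSet hμ t w, Finset.sum_const,
        nsmul_eq_mul]
    · intro w _ w' _ hww'
      exact cylSet_disjoint hww'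
  -- per-t comparison
  have hcard : ∀ t, (G 1 r t).card ≤ (G r 1 t).card := by
    intro t
    apply Finset.card_le_card_of_injOn (wordSwap n b1 j b1)
    · intro w hw
      simp only [hG, Finset.mem_coe, Finset.mem_filter, Finset.mem_univ, true_and] at hw ⊢
      exact wordSwap_good hbj hmaxj hn2 hr b1 hw
    · intro w1 h1 w2 h2 heq
      simp only [hG, Finset.coe_filter, Set.mem_setOf_eq, Finset.mem_univ, true_and]
        at h1 h2
      rw [← wordSwap_involutive hbj hmaxj hn2 hr b1 h1,
        ← wordSwap_involutive hbj hmaxj hn2 hr b1 h2, heq]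
  have hperT : ∀ t, μ (E 1 r t) ≤ μ (E r 1 t) := by
    intro t
    rw [hmeasure, hmeasure]
    exact mul_le_mul_left (Nat.cast_le.mpr (hcard t)) _
  -- disjointness in t
  have hdisj : ∀ a b : ℕ, Pairwise (Function.onFun Disjoint fun t => E a b t) := by
    intro a b t t' htt'
    rw [Function.onFun, Set.disjoint_left]
    intro ω h1 h2
    apply htt'
    have e1 := h1.1
    have e2 := h2.1
    rw [e1] at e2
    exact_mod_cast e2
  -- Fab bounds
  have hsub1 : Fab n b1 j 1 r ⊆ ⋃ t, E 1 r t := by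
    rintro ω ⟨-, t, hTB, hc1, hc2⟩
    exact Set.mem_iUnion.mpr ⟨t, hTB, hc1, hc2⟩
  have hsub2 : (⋃ t, E r 1 t) ⊆ Fab n b1 j r 1 := by
    rintro ω hω
    obtain ⟨t, hTB, hc1, hc2⟩ := Set.mem_iUnion.mp hω
    refine ⟨⟨t, ?_⟩, t, hTB, hc1, hc2⟩
    have hcB : condB n ω t := (TB_eq_iff.mp hTB).1
    have hb1mem : b1 ∈ nonemptyBins n ω t := by
      simp only [nonemptyBins, Finset.mem_filter, Finset.mem_univ, true_and, hc1]
      exact_mod_cast by omega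
    have hjmem : j ∈ nonemptyBins n ω t := by
      simp only [nonemptyBins, Finset.mem_filter, Finset.mem_univ, true_and, hc2]
      exact_mod_cast one_pos
    have hsub : ({b1, j} : Finset (Fin k)) ⊆ nonemptyBins n ω t := by
      rw [Finset.insert_subset_iff, Finset.singleton_subset_iff]
      exact ⟨hb1mem, hjmem⟩
    have hcards : (nonemptyBins n ω t).card ≤ ({b1, j} : Finset (Fin k)).card := by
      rw [Finset.card_pair hbj, hcB.1]
    exact (Finset.eq_of_subset_of_card_le hsub hcards).symm
  calc μ (Fab n b1 j 1 r) ≤ μ (⋃ t, E 1 r t) := measure_mono hsub1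
    _ = ∑' t, μ (E 1 r t) := measure_iUnion (hdisj 1 r) (hmeas 1 r)
    _ ≤ ∑' t, μ (E r 1 t) := ENNReal.tsum_le_tsum hperT
    _ = μ (⋃ t, E r 1 t) := (measure_iUnion (hdisj r 1) (hmeas r 1)).symm
    _ ≤ μ (Fab n b1 j r 1) := measure_mono hsub2


end BallsBins
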